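/- Let G be a finite directed multigraph with no directed cycles, and let M = (I − A)^{-1} be its weighted path matrix over ℤ[[x_e : e ∈ E]] (whose entries are polynomials, since an acyclic finite graph has only finitely many paths between any two vertices). Then for any ordered k-subsets A = {a_1, …, a_k}, B = {b_1, …, b_k} of the vertices, the minor Δ_{A,B}(M) equals Σ_{P ∈ 𝒫_{A,B}(G)} sgn(P) wt(P), the signed sum over all collections P = (P_1, …, P_k) of pairwise vertex-disjoint directed paths with P_i : a_i ⇝ b_{π(i)} for some π ∈ S_k (the Lindström–Gessel–Viennot lemma). -/

import Mathlib

open MvPowerSeries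

noncomputable section

namespace PathMatrix

variable {n k : ℕ} {E : Type} [Fintype E]

/-- `IsWalkFrom src tgt u v l` : the list of edges `l` forms a directed walk (path)
from vertex `u` to vertex `v`, traversing the edges head-to-tail. -/
def IsWalkFrom (src tgt : E → Fin n) : Fin n → Fin n → List E → Prop
  | u, v, [] => u = v
  | u, v, e :: l => src e = u ∧ IsWalkFrom src tgt (tgt e) v l

/-- The weight of a path: the product of the variables of its edges (with multiplicity). -/
def pathWt (l : List E) : MvPowerSeries E ℤ :=
  (l.map fun e => (X e : MvPowerSeries E ℤ)).prod

/-- The weighted adjacency matrix. -/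
def adjMat (src tgt : E → Fin n) : Matrix (Fin n) (Fin n) (MvPowerSeries E ℤ) :=
  fun i j => ∑ e : E, if src e = i ∧ tgt e = j then (X e : MvPowerSeries E ℤ) else 0

/-- The list of vertices visited by a walk starting at `u` with edge list `l`. -/
def walkVerts (tgt : E → Fin n) (u : Fin n) (l : List E) : List (Fin n) :=
  u :: l.map tgt

/-- A self-avoiding cycle, recorded as a list of edges starting (canonically) at the
least vertex it visits. -/
def IsCycleMin (src tgt : E → Fin n) (l : List E) : Prop :=
  l ≠ [] ∧ ∃ v : Fin n, IsWalkFrom src tgt v v l ∧ (l.map src).Nodup ∧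
    ∀ u ∈ l.map src, v ≤ u

/-- `𝒞(G)`: collections of pairwise vertex-disjoint self-avoiding cycles. -/
def CycColls (src tgt : E → Fin n) : Set (Finset (List E)) :=
  {C | (∀ l ∈ C, IsCycleMin src tgt l) ∧
    ∀ l ∈ C, ∀ l' ∈ C, l ≠ l' → ∀ v ∈ l.map src, v ∉ l'.map src}

/-- The weight of a cycle collection. -/
def cycWt (C : Finset (List E)) : MvPowerSeries E ℤ := ∏ l ∈ C, pathWt l

/-- The sign of a cycle collection, `(-1)^{number of cycles}`. -/
def cycSgn (C : Finset (List E)) : ℤ := (-1) ^ C.card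

/-- Membership in `𝒫̃_{A,B,π}(G)`. -/
def TuplePaths (src tgt : E → Fin n) (a b : Fin k → Fin n)
    (π : Equiv.Perm (Fin k)) (P : Fin k → List E) : Prop :=
  ∀ i, IsWalkFrom src tgt (a i) (b (π i)) (P i)

/-- Membership in `𝒫_{A,B,π}(G)`: self-avoiding, pairwise vertex-disjoint paths. -/
def IsSystem (src tgt : E → Fin n) (a b : Fin k → Fin n)
    (π : Equiv.Perm (Fin k)) (P : Fin k → List E) : Prop :=
  TuplePaths src tgt a b π P ∧
  (∀ i, (walkVerts tgt (a i) (P i)).Nodup) ∧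
  ∀ i j, i ≠ j → ∀ v ∈ walkVerts tgt (a i) (P i), v ∉ walkVerts tgt (a j) (P j)

/-- `ℱ_{A,B}(G)`: self-avoiding flows `(π, P, C)`. -/
def Flows (src tgt : E → Fin n) (a b : Fin k → Fin n) :
    Set (Equiv.Perm (Fin k) × (Fin k → List E) × Finset (List E)) :=
  {F | IsSystem src tgt a b F.1 F.2.1 ∧ F.2.2 ∈ CycColls src tgt ∧
    ∀ i, ∀ v ∈ walkVerts tgt (a i) (F.2.1 i), ∀ l ∈ F.2.2, v ∉ l.map src}

/-- The weight of a path collection. -/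
def colWt (P : Fin k → List E) : MvPowerSeries E ℤ := ∏ i, pathWt (P i)

/-- The sign and weight of a flow. -/
def flowSgn (F : Equiv.Perm (Fin k) × (Fin k → List E) × Finset (List E)) : ℤ :=
  (Equiv.Perm.sign F.1 : ℤ) * cycSgn F.2.2

def flowWt (F : Equiv.Perm (Fin k) × (Fin k → List E) × Finset (List E)) :
    MvPowerSeries E ℤ :=
  colWt F.2.1 * cycWt F.2.2

/-- The product (coefficientwise) topology on formal power series, with `ℤ` discrete. -/
instance : TopologicalSpace (MvPowerSeries E ℤ) :=
  inferInstanceAs (TopologicalSpace ((E →₀ ℕ) → ℤ))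




/-! ### Auxiliary lemmas -/

set_option linter.unusedSectionVars false

section Aux

variable {src tgt : E → Fin n}

lemma isWalkFrom_append {u v w : Fin n} {l₁ l₂ : List E}
    (h1 : IsWalkFrom src tgt u v l₁) (h2 : IsWalkFrom src tgt v w l₂) :
    IsWalkFrom src tgt u w (l₁ ++ l₂) := by
  induction l₁ generalizing u with
  | nil => cases h1; exact h2
  | cons e l ih => exact ⟨h1.1, ih h1.2⟩

lemma walkVerts_length (u : Fin n) (l : List E) :
    (walkVerts tgt u l).length = l.length + 1 := by simp [walkVerts]

lemma walkVerts_append (u : Fin n) (l₁ l₂ : List E) :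
    walkVerts tgt u (l₁ ++ l₂) = walkVerts tgt u l₁ ++ l₂.map tgt := by
  simp [walkVerts]

lemma walkVerts_take (u : Fin n) (l : List E) (m : ℕ) :
    walkVerts tgt u (l.take m) = (walkVerts tgt u l).take (m + 1) := by
  simp [walkVerts, List.map_take]

lemma walkVerts_drop {u v : Fin n} {l : List E} {m : ℕ}
    (hm : m < (walkVerts tgt u l).length)
    (hv : (walkVerts tgt u l)[m] = v) :
    walkVerts tgt v (l.drop m) = (walkVerts tgt u l).drop m := by
  rw [List.drop_eq_getElem_cons hm, hv]
  simp [walkVerts, List.map_drop]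

lemma walk_split {u w : Fin n} {l : List E}
    (h : IsWalkFrom src tgt u w l) (m : ℕ) (hm : m < (walkVerts tgt u l).length) :
    IsWalkFrom src tgt u ((walkVerts tgt u l)[m]) (l.take m) ∧
    IsWalkFrom src tgt ((walkVerts tgt u l)[m]) w (l.drop m) := by
  induction l generalizing u m with
  | nil =>
    have hm0 : m = 0 := by
      have := walkVerts_length (tgt := tgt) u ([] : List E)
      simp at this hm
      omega
    subst hm0
    exact ⟨rfl, h⟩
  | cons e l ih =>
    cases m with
    | zero => exact ⟨rfl, h⟩
    | succ m =>
      have hm' : m < (walkVerts tgt (tgt e) l).length := by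
        have h1 := walkVerts_length (tgt := tgt) u (e :: l)
        have h2 := walkVerts_length (tgt := tgt) (tgt e) l
        simp at h1 h2 ⊢
        omega
      have hget : (walkVerts tgt u (e :: l))[m + 1]'hm =
          (walkVerts tgt (tgt e) l)[m]'hm' := by
        simp [walkVerts]
      rw [hget]
      obtain ⟨h1, h2⟩ := ih h.2 m hm'
      exact ⟨⟨h.1, h1⟩, h2⟩

lemma nodup_walkVerts (hacyc : ∀ (v : Fin n) (l : List E), IsWalkFrom src tgt v v l → l = [])
    {u w : Fin n} {l : List E} (h : IsWalkFrom src tgt u w l) :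
    (walkVerts tgt u l).Nodup := by
  set vs := walkVerts tgt u l with hvs
  have key : ∀ p q : ℕ, ∀ (hp : p < vs.length) (hq : q < vs.length),
      p < q → vs[p] = vs[q] → False := by
    intro p q hp hq hpq heq
    have h1 := (walk_split h p hp).2
    have hlen2 : (q - p) < (walkVerts tgt (vs[p]) (l.drop p)).length := by
      rw [walkVerts_drop hp rfl, List.length_drop, ← hvs]
      omega
    have hgj : (walkVerts tgt (vs[p]) (l.drop p))[q - p]'hlen2 = vs[p] := by
      have hd := walkVerts_drop (tgt := tgt) hp (rfl : vs[p] = vs[p])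
      have : (walkVerts tgt (vs[p]) (l.drop p))[q - p]'hlen2 =
          (vs.drop p)[q - p]'(by rw [← hd]; exact hlen2) := by
        congr 1
      rw [this, List.getElem_drop]
      have hpq' : p + (q - p) = q := by omega
      simp_rw [hpq']
      exact heq.symm
    have h2 := (walk_split h1 (q - p) hlen2).1
    rw [hgj] at h2
    have hnil := hacyc _ _ h2
    have hlenvs : vs.length = l.length + 1 := walkVerts_length u l
    have hlen3 : ((l.drop p).take (q - p)).length = q - p := by
      rw [List.length_take, List.length_drop]
      omega
    rw [hnil] at hlen3
    simp at hlen3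
    omega
  rw [List.nodup_iff_injective_get]
  intro i j hij
  by_contra hne
  have hij' : vs[(i:ℕ)] = vs[(j:ℕ)] := hij
  rcases lt_trichotomy (i : ℕ) (j : ℕ) with hlt | heq | hgt
  · exact key i j i.isLt j.isLt hlt hij'
  · exact hne (Fin.ext heq)
  · exact key j i j.isLt i.isLt hgt hij'.symm

end Aux


/-! ### Matrix entries as sums over walks -/

section Entries

attribute [local instance] Classical.propDecidable

variable (src tgt : E → Fin n)

@[simp] lemma isWalkFrom_nil {u v : Fin n} : IsWalkFrom src tgt u v ([] : List E) ↔ u = v :=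
  Iff.rfl

@[simp] lemma isWalkFrom_cons {u v : Fin n} {e : E} {l : List E} :
    IsWalkFrom src tgt u v (e :: l) ↔ src e = u ∧ IsWalkFrom src tgt (tgt e) v l :=
  Iff.rfl

@[simp] lemma pathWt_nil : pathWt ([] : List E) = 1 := rfl

@[simp] lemma pathWt_cons (e : E) (l : List E) :
    pathWt (e :: l) = (X e : MvPowerSeries E ℤ) * pathWt l := by
  simp [pathWt]

lemma pathWt_append (l₁ l₂ : List E) : pathWt (l₁ ++ l₂) = pathWt l₁ * pathWt l₂ := by
  simp [pathWt]

/-- The finset of all edge lists of length `m`. -/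
def vecs (E : Type) [Fintype E] (m : ℕ) : Finset (List E) :=
  (Finset.univ : Finset (Fin m → E)).image List.ofFn

lemma mem_vecs {m : ℕ} {l : List E} : l ∈ vecs E m ↔ l.length = m := by
  constructor
  · rintro h
    simp only [vecs, Finset.mem_image] at h
    obtain ⟨f, -, rfl⟩ := h
    simp
  · intro h
    subst h
    simp only [vecs, Finset.mem_image]
    exact ⟨fun i => l.get (Fin.cast rfl i), Finset.mem_univ _, List.ofFn_get l⟩

lemma sum_vecs {M : Type*} [AddCommMonoid M] (m : ℕ) (F : List E → M) :
    ∑ l ∈ vecs E m, F l = ∑ f : Fin m → E, F (List.ofFn f) := by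
  rw [vecs, Finset.sum_image]
  intro f _ g _ h
  exact List.ofFn_injective h

/-- The finset of all edge lists of length `< N`. -/
def allW (E : Type) [Fintype E] (N : ℕ) : Finset (List E) :=
  (Finset.range N).biUnion (vecs E)

lemma mem_allW {N : ℕ} {l : List E} : l ∈ allW E N ↔ l.length < N := by
  simp [allW, mem_vecs]

lemma adj_pow_entry_fn (m : ℕ) (i j : Fin n) :
    ((adjMat src tgt) ^ m) i j =
      ∑ f : Fin m → E, if IsWalkFrom src tgt i j (List.ofFn f) then pathWt (List.ofFn f)
        else 0 := by
  induction m generalizing i with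
  | zero =>
    have : ∀ f : Fin 0 → E, List.ofFn f = ([] : List E) := by
      intro f; simp
    simp only [this]
    simp [Matrix.one_apply, pow_zero, eq_comm]
  | succ m ih =>
    rw [pow_succ', Matrix.mul_apply]
    have lhs : ∀ t, adjMat src tgt i t * ((adjMat src tgt) ^ m) t j =
        ∑ e : E, if src e = i ∧ tgt e = t then
          (X e : MvPowerSeries E ℤ) * ((adjMat src tgt) ^ m) t j else 0 := by
      intro t
      rw [adjMat, Finset.sum_mul]
      exact Finset.sum_congr rfl fun e _ => by rw [ite_mul, zero_mul]
    simp only [lhs]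
    rw [Finset.sum_comm]
    have inner : ∀ e : E, (∑ t, if src e = i ∧ tgt e = t then
        (X e : MvPowerSeries E ℤ) * ((adjMat src tgt) ^ m) t j else 0) =
        if src e = i then (X e : MvPowerSeries E ℤ) * ((adjMat src tgt) ^ m) (tgt e) j
          else 0 := by
      intro e
      by_cases h : src e = i
      · simp [h]
      · simp [h]
    simp only [inner]
    rw [← Equiv.sum_comp (Fin.consEquiv (fun _ : Fin (m+1) => E))]
    rw [Fintype.sum_prod_type]
    refine Finset.sum_congr rfl fun e _ => ?_
    have hofn : ∀ f : Fin m → E, List.ofFn (Fin.consEquiv (fun _ : Fin (m+1) => E) (e, f))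
        = e :: List.ofFn f := by
      intro f
      simp [Fin.consEquiv, List.ofFn_succ]
    simp only [hofn]
    by_cases h : src e = i
    · rw [ih (tgt e), if_pos h, Finset.mul_sum]
      refine Finset.sum_congr rfl fun f _ => ?_
      simp [h, mul_ite]
    · rw [if_neg h]
      refine (Finset.sum_eq_zero fun f _ => ?_).symm
      simp [h]

lemma adj_pow_entry (m : ℕ) (i j : Fin n) :
    ((adjMat src tgt) ^ m) i j =
      ∑ l ∈ vecs E m, if IsWalkFrom src tgt i j l then pathWt l else 0 := by
  rw [sum_vecs m (fun l => if IsWalkFrom src tgt i j l then pathWt l else 0)]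
  exact adj_pow_entry_fn src tgt m i j

lemma adj_pow_n (hacyc : ∀ (v : Fin n) (l : List E), IsWalkFrom src tgt v v l → l = []) :
    (adjMat src tgt) ^ n = 0 := by
  apply Matrix.ext
  intro i j
  rw [adj_pow_entry]
  simp only [Matrix.zero_apply]
  apply Finset.sum_eq_zero
  intro l hl
  rw [if_neg]
  intro hw
  have hnd := nodup_walkVerts hacyc hw
  have hlen := List.Nodup.length_le_card hnd
  rw [walkVerts_length] at hlen
  rw [mem_vecs] at hl
  simp [hl] at hlen

lemma walk_length_lt (hacyc : ∀ (v : Fin n) (l : List E), IsWalkFrom src tgt v v l → l = [])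
    {i j : Fin n} {l : List E} (hw : IsWalkFrom src tgt i j l) : l.length < n := by
  have hnd := nodup_walkVerts hacyc hw
  have hlen := List.Nodup.length_le_card hnd
  rw [walkVerts_length] at hlen
  simpa using hlen

lemma inv_entry (hacyc : ∀ (v : Fin n) (l : List E), IsWalkFrom src tgt v v l → l = [])
    (i j : Fin n) :
    (1 - adjMat src tgt)⁻¹ i j =
      ∑ l ∈ allW E n, if IsWalkFrom src tgt i j l then pathWt l else 0 := by
  set A := adjMat src tgt
  set S := ∑ m ∈ Finset.range n, A ^ m with hS
  have hgeom : S * (1 - A) = 1 := by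
    have h2 : S * (A - 1) = A ^ n - 1 := geom_sum_mul A n
    have h3 : S * (1 - A) = 1 - A ^ n := by
      rw [← neg_sub A (1 : Matrix (Fin n) (Fin n) (MvPowerSeries E ℤ)), mul_neg, h2,
        neg_sub]
    rw [h3, adj_pow_n src tgt hacyc, sub_zero]
  have hinv : (1 - A)⁻¹ = S := Matrix.inv_eq_left_inv hgeom
  rw [hinv, hS]
  rw [Matrix.sum_apply]
  rw [allW, Finset.sum_biUnion]
  · exact Finset.sum_congr rfl fun m _ => adj_pow_entry src tgt m i j
  · intro m₁ _ m₂ _ hne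
    refine Finset.disjoint_left.mpr fun l hl₁ hl₂ => hne ?_
    rw [← mem_vecs.mp hl₁, ← mem_vecs.mp hl₂]

end Entries


/-! ### Determinant expansion -/

section Det

attribute [local instance] Classical.propDecidable

variable (src tgt : E → Fin n) (a b : Fin k → Fin n)

/-- Pairwise vertex-disjointness of a tuple of paths. -/
def Disj (tgt : E → Fin n) (a : Fin k → Fin n) (P : Fin k → List E) : Prop :=
  ∀ i j, i ≠ j → ∀ v ∈ walkVerts tgt (a i) (P i), v ∉ walkVerts tgt (a j) (P j)

/-- All pairs `(σ, P)` where `P` is a tuple of walks joining `a i` to `b (σ i)`. -/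
def bigS : Finset (Equiv.Perm (Fin k) × (Fin k → List E)) :=
  ((Finset.univ : Finset (Equiv.Perm (Fin k))) ×ˢ
    Fintype.piFinset (fun _ : Fin k => allW E n)).filter
      (fun q => TuplePaths src tgt a b q.1 q.2)

lemma prod_ite_all {κ : Type*} [Fintype κ] {R : Type*} [CommMonoidWithZero R]
    (c : κ → Prop) [DecidablePred c] (f : κ → R) :
    (∏ i, if c i then f i else 0) = if (∀ i, c i) then ∏ i, f i else 0 := by
  by_cases h : ∀ i, c i
  · rw [if_pos h]
    exact Finset.prod_congr rfl fun i _ => if_pos (h i)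
  · rw [if_neg h]
    push_neg at h
    obtain ⟨i, hi⟩ := h
    exact Finset.prod_eq_zero (Finset.mem_univ i) (if_neg hi)

lemma det_eq_sum_bigS
    (hacyc : ∀ (v : Fin n) (l : List E), IsWalkFrom src tgt v v l → l = []) :
    (((1 - adjMat src tgt)⁻¹).submatrix a b).det =
      ∑ q ∈ bigS src tgt a b,
        ((Equiv.Perm.sign q.1 : ℤ) : MvPowerSeries E ℤ) * colWt q.2 := by
  rw [← Matrix.det_transpose, Matrix.det_apply']
  have hentry : ∀ (σ : Equiv.Perm (Fin k)) (i : Fin k),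
      ((((1 - adjMat src tgt)⁻¹).submatrix a b).transpose) (σ i) i
        = ∑ l ∈ allW E n, if IsWalkFrom src tgt (a i) (b (σ i)) l then pathWt l else 0 := by
    intro σ i
    rw [Matrix.transpose_apply, Matrix.submatrix_apply]
    exact inv_entry src tgt hacyc _ _
  have step1 : ∀ σ : Equiv.Perm (Fin k),
      (∏ i, (((1 - adjMat src tgt)⁻¹).submatrix a b).transpose (σ i) i)
        = ∑ P ∈ Fintype.piFinset (fun _ : Fin k => allW E n),
            if TuplePaths src tgt a b σ P then colWt P else 0 := by
    intro σ
    rw [Finset.prod_congr rfl (fun i _ => hentry σ i), Finset.prod_univ_sum]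
    refine Finset.sum_congr rfl fun P _ => ?_
    rw [prod_ite_all (fun i => IsWalkFrom src tgt (a i) (b (σ i)) (P i))
      (fun i => pathWt (P i))]
    unfold TuplePaths colWt
    split <;> rfl
  calc (∑ σ : Equiv.Perm (Fin k), ((Equiv.Perm.sign σ : ℤ) : MvPowerSeries E ℤ) *
          ∏ i, (((1 - adjMat src tgt)⁻¹).submatrix a b).transpose (σ i) i)
      = ∑ σ : Equiv.Perm (Fin k), ∑ P ∈ Fintype.piFinset (fun _ : Fin k => allW E n),
          (if TuplePaths src tgt a b σ P then
            ((Equiv.Perm.sign σ : ℤ) : MvPowerSeries E ℤ) * colWt P else 0) := by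
        refine Finset.sum_congr rfl fun σ _ => ?_
        rw [step1 σ, Finset.mul_sum]
        exact Finset.sum_congr rfl fun P _ => by rw [mul_ite, mul_zero]
    _ = ∑ q ∈ ((Finset.univ : Finset (Equiv.Perm (Fin k))) ×ˢ
          Fintype.piFinset (fun _ : Fin k => allW E n)),
          (if TuplePaths src tgt a b q.1 q.2 then
            ((Equiv.Perm.sign q.1 : ℤ) : MvPowerSeries E ℤ) * colWt q.2 else 0) := by
        rw [Finset.sum_product]
    _ = _ := by
        rw [bigS, Finset.sum_filter]

/-! ### The path-swapping involution -/

/-- Vertex list of the `i`-th path. -/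
def wv (tgt : E → Fin n) (a : Fin k → Fin n) (P : Fin k → List E) (i : Fin k) :
    List (Fin n) := walkVerts tgt (a i) (P i)

/-- Indices whose path meets another path. -/
def meets (tgt : E → Fin n) (a : Fin k → Fin n) (P : Fin k → List E) : Finset (Fin k) :=
  Finset.univ.filter fun i => ∃ j, j ≠ i ∧ ∃ v ∈ wv tgt a P i, v ∈ wv tgt a P j

lemma mem_meets {P : Fin k → List E} {i : Fin k} :
    i ∈ meets tgt a P ↔ ∃ j, j ≠ i ∧ ∃ v ∈ wv tgt a P i, v ∈ wv tgt a P j := by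
  simp [meets]

lemma meets_nonempty_iff {P : Fin k → List E} :
    (meets tgt a P).Nonempty ↔ ¬ Disj tgt a P := by
  constructor
  · rintro ⟨i, hi⟩ hd
    obtain ⟨j, hj, v, hvi, hvj⟩ := (mem_meets tgt a).mp hi
    exact hd i j (Ne.symm hj) v hvi hvj
  · intro hd
    simp only [Disj, not_forall] at hd
    obtain ⟨i, j, hij, v, hvi, hvj⟩ := hd
    refine ⟨i, (mem_meets tgt a).mpr ⟨j, Ne.symm hij, v, hvi, not_not.mp hvj⟩⟩

/-- The least index whose path meets another path. -/
def i0F (P : Fin k → List E) (h : (meets tgt a P).Nonempty) : Fin k :=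
  (meets tgt a P).min' h

/-- Position `m` on path `i` carries a vertex shared with another path. -/
def QP (tgt : E → Fin n) (a : Fin k → Fin n) (P : Fin k → List E) (i : Fin k) (m : ℕ) :
    Prop :=
  ∃ v, (wv tgt a P i)[m]? = some v ∧ ∃ j, j ≠ i ∧ v ∈ wv tgt a P j

lemma q_exists (P : Fin k → List E) (h : (meets tgt a P).Nonempty) :
    ∃ m, QP tgt a P (i0F tgt a P h) m := by
  have hi := (meets tgt a P).min'_mem h
  rw [mem_meets] at hi
  obtain ⟨j, hj, v, hvi, hvj⟩ := hi
  obtain ⟨m, hm⟩ := List.mem_iff_getElem?.mp hvi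
  exact ⟨m, v, hm, j, hj, hvj⟩

/-- First shared position on path `i0`. -/
def m0F (P : Fin k → List E) (h : (meets tgt a P).Nonempty) : ℕ :=
  Nat.find (q_exists tgt a P h)

/-- First shared vertex on path `i0`. -/
def v0F (P : Fin k → List E) (h : (meets tgt a P).Nonempty) : Fin n :=
  (wv tgt a P (i0F tgt a P h)).getD (m0F tgt a P h) (a (i0F tgt a P h))

lemma v0_spec (P : Fin k → List E) (h : (meets tgt a P).Nonempty) :
    (wv tgt a P (i0F tgt a P h))[m0F tgt a P h]? = some (v0F tgt a P h) ∧
      ∃ j, j ≠ i0F tgt a P h ∧ v0F tgt a P h ∈ wv tgt a P j := by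
  obtain ⟨v, hv, hj⟩ : QP tgt a P (i0F tgt a P h) (m0F tgt a P h) :=
    Nat.find_spec (q_exists tgt a P h)
  obtain ⟨hlt, hget⟩ := List.getElem?_eq_some_iff.mp hv
  have hv0 : v0F tgt a P h = v := by
    unfold v0F
    rw [List.getD_eq_getElem _ _ hlt, hget]
  rw [hv0]
  exact ⟨hv, hj⟩

lemma m0_min (P : Fin k → List E) (h : (meets tgt a P).Nonempty) :
    ∀ m < m0F tgt a P h, ¬ QP tgt a P (i0F tgt a P h) m :=
  fun m hm => Nat.find_min (q_exists tgt a P h) hm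

/-- The candidate partners of `i0` through `v0`. -/
def jset (P : Fin k → List E) (h : (meets tgt a P).Nonempty) : Finset (Fin k) :=
  Finset.univ.filter fun j => j ≠ i0F tgt a P h ∧ v0F tgt a P h ∈ wv tgt a P j

lemma jset_nonempty (P : Fin k → List E) (h : (meets tgt a P).Nonempty) :
    (jset tgt a P h).Nonempty := by
  obtain ⟨j, hj, hvj⟩ := (v0_spec tgt a P h).2
  exact ⟨j, by simp [jset, hj, hvj]⟩

/-- The least partner index. -/
def j0F (P : Fin k → List E) (h : (meets tgt a P).Nonempty) : Fin k :=
  (jset tgt a P h).min' (jset_nonempty tgt a P h)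

lemma j0_spec (P : Fin k → List E) (h : (meets tgt a P).Nonempty) :
    j0F tgt a P h ≠ i0F tgt a P h ∧ v0F tgt a P h ∈ wv tgt a P (j0F tgt a P h) := by
  have := (jset tgt a P h).min'_mem (jset_nonempty tgt a P h)
  simp only [jset, Finset.mem_filter, Finset.mem_univ, true_and] at this
  exact this

lemma mj_exists (P : Fin k → List E) (h : (meets tgt a P).Nonempty) :
    ∃ m : ℕ, (wv tgt a P (j0F tgt a P h))[m]? = some (v0F tgt a P h) :=
  List.mem_iff_getElem?.mp (j0_spec tgt a P h).2

/-- First position of `v0` on path `j0`. -/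
def mjF (P : Fin k → List E) (h : (meets tgt a P).Nonempty) : ℕ :=
  Nat.find (mj_exists tgt a P h)

lemma mj_spec (P : Fin k → List E) (h : (meets tgt a P).Nonempty) :
    (wv tgt a P (j0F tgt a P h))[mjF tgt a P h]? = some (v0F tgt a P h) :=
  Nat.find_spec (mj_exists tgt a P h)

lemma mj_min (P : Fin k → List E) (h : (meets tgt a P).Nonempty) :
    ∀ m < mjF tgt a P h, ¬ (wv tgt a P (j0F tgt a P h))[m]? = some (v0F tgt a P h) :=
  fun m hm => Nat.find_min (mj_exists tgt a P h) hm

/-- The swapped tuple of paths. -/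
def newPaths (P : Fin k → List E) (h : (meets tgt a P).Nonempty) : Fin k → List E :=
  Function.update
    (Function.update P (i0F tgt a P h)
      ((P (i0F tgt a P h)).take (m0F tgt a P h) ++ (P (j0F tgt a P h)).drop (mjF tgt a P h)))
    (j0F tgt a P h)
    ((P (j0F tgt a P h)).take (mjF tgt a P h) ++ (P (i0F tgt a P h)).drop (m0F tgt a P h))

/-- The tail-swapping involution on non-disjoint path systems. -/
def swapMap (q : Equiv.Perm (Fin k) × (Fin k → List E)) :
    Equiv.Perm (Fin k) × (Fin k → List E) :=
  if h : (meets tgt a q.2).Nonempty then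
    (q.1 * Equiv.swap (i0F tgt a q.2 h) (j0F tgt a q.2 h), newPaths tgt a q.2 h)
  else q

lemma m0_lt (P : Fin k → List E) (h : (meets tgt a P).Nonempty) :
    m0F tgt a P h < (wv tgt a P (i0F tgt a P h)).length :=
  (List.getElem?_eq_some_iff.mp (v0_spec tgt a P h).1).1

lemma v0_at (P : Fin k → List E) (h : (meets tgt a P).Nonempty) :
    (wv tgt a P (i0F tgt a P h))[m0F tgt a P h]'(m0_lt tgt a P h) = v0F tgt a P h :=
  (List.getElem?_eq_some_iff.mp (v0_spec tgt a P h).1).2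

lemma mj_lt (P : Fin k → List E) (h : (meets tgt a P).Nonempty) :
    mjF tgt a P h < (wv tgt a P (j0F tgt a P h)).length :=
  (List.getElem?_eq_some_iff.mp (mj_spec tgt a P h)).1

lemma v0_at_j (P : Fin k → List E) (h : (meets tgt a P).Nonempty) :
    (wv tgt a P (j0F tgt a P h))[mjF tgt a P h]'(mj_lt tgt a P h) = v0F tgt a P h :=
  (List.getElem?_eq_some_iff.mp (mj_spec tgt a P h)).2

lemma v0_mem_i0 (P : Fin k → List E) (h : (meets tgt a P).Nonempty) :
    v0F tgt a P h ∈ wv tgt a P (i0F tgt a P h) := by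
  rw [← v0_at tgt a P h]
  exact List.getElem_mem _

lemma i0_le_j0 (P : Fin k → List E) (h : (meets tgt a P).Nonempty) :
    i0F tgt a P h ≤ j0F tgt a P h := by
  refine Finset.min'_le _ _ ?_
  exact (mem_meets tgt a).mpr ⟨i0F tgt a P h, Ne.symm (j0_spec tgt a P h).1,
    v0F tgt a P h, (j0_spec tgt a P h).2, v0_mem_i0 tgt a P h⟩

lemma newPaths_i0 (P : Fin k → List E) (h : (meets tgt a P).Nonempty) :
    newPaths tgt a P h (i0F tgt a P h) =
      (P (i0F tgt a P h)).take (m0F tgt a P h) ++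
        (P (j0F tgt a P h)).drop (mjF tgt a P h) := by
  rw [newPaths, Function.update_of_ne (Ne.symm (j0_spec tgt a P h).1), Function.update_self]

lemma newPaths_j0 (P : Fin k → List E) (h : (meets tgt a P).Nonempty) :
    newPaths tgt a P h (j0F tgt a P h) =
      (P (j0F tgt a P h)).take (mjF tgt a P h) ++
        (P (i0F tgt a P h)).drop (m0F tgt a P h) := by
  rw [newPaths, Function.update_self]

lemma newPaths_other (P : Fin k → List E) (h : (meets tgt a P).Nonempty) {i : Fin k}
    (h1 : i ≠ i0F tgt a P h) (h2 : i ≠ j0F tgt a P h) :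
    newPaths tgt a P h i = P i := by
  rw [newPaths, Function.update_of_ne h2, Function.update_of_ne h1]

lemma wv_new_i0 (P : Fin k → List E) (h : (meets tgt a P).Nonempty) :
    wv tgt a (newPaths tgt a P h) (i0F tgt a P h) =
      (wv tgt a P (i0F tgt a P h)).take (m0F tgt a P h + 1) ++
        (wv tgt a P (j0F tgt a P h)).drop (mjF tgt a P h + 1) := by
  rw [wv, newPaths_i0, walkVerts_append]
  congr 1
  · exact walkVerts_take _ _ _
  · rw [wv, walkVerts, List.drop_succ_cons, List.map_drop]

lemma wv_new_j0 (P : Fin k → List E) (h : (meets tgt a P).Nonempty) :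
    wv tgt a (newPaths tgt a P h) (j0F tgt a P h) =
      (wv tgt a P (j0F tgt a P h)).take (mjF tgt a P h + 1) ++
        (wv tgt a P (i0F tgt a P h)).drop (m0F tgt a P h + 1) := by
  rw [wv, newPaths_j0, walkVerts_append]
  congr 1
  · exact walkVerts_take _ _ _
  · rw [wv, walkVerts, List.drop_succ_cons, List.map_drop]

lemma wv_new_other (P : Fin k → List E) (h : (meets tgt a P).Nonempty) {i : Fin k}
    (h1 : i ≠ i0F tgt a P h) (h2 : i ≠ j0F tgt a P h) :
    wv tgt a (newPaths tgt a P h) i = wv tgt a P i := by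
  rw [wv, newPaths_other tgt a P h h1 h2]; rfl

lemma v0_mem_new_i0 (P : Fin k → List E) (h : (meets tgt a P).Nonempty) :
    v0F tgt a P h ∈ wv tgt a (newPaths tgt a P h) (i0F tgt a P h) := by
  rw [wv_new_i0]
  refine List.mem_append_left _ ?_
  rw [List.take_succ]
  refine List.mem_append_right _ ?_
  rw [(v0_spec tgt a P h).1]
  simp

lemma v0_mem_new_j0 (P : Fin k → List E) (h : (meets tgt a P).Nonempty) :
    v0F tgt a P h ∈ wv tgt a (newPaths tgt a P h) (j0F tgt a P h) := by
  rw [wv_new_j0]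
  refine List.mem_append_left _ ?_
  rw [List.take_succ]
  refine List.mem_append_right _ ?_
  rw [mj_spec tgt a P h]
  simp

lemma meets_new_nonempty (P : Fin k → List E) (h : (meets tgt a P).Nonempty) :
    (meets tgt a (newPaths tgt a P h)).Nonempty :=
  ⟨i0F tgt a P h, (mem_meets tgt a).mpr ⟨j0F tgt a P h, (j0_spec tgt a P h).1,
    v0F tgt a P h, v0_mem_new_i0 tgt a P h, v0_mem_new_j0 tgt a P h⟩⟩

lemma mem_new_i0 (P : Fin k → List E) (h : (meets tgt a P).Nonempty) {w : Fin n}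
    (hw : w ∈ wv tgt a (newPaths tgt a P h) (i0F tgt a P h)) :
    w ∈ wv tgt a P (i0F tgt a P h) ∨ w ∈ wv tgt a P (j0F tgt a P h) := by
  rw [wv_new_i0] at hw
  rcases List.mem_append.mp hw with hw | hw
  · exact Or.inl ((List.take_sublist _ _).subset hw)
  · exact Or.inr ((List.drop_sublist _ _).subset hw)

lemma mem_new_j0 (P : Fin k → List E) (h : (meets tgt a P).Nonempty) {w : Fin n}
    (hw : w ∈ wv tgt a (newPaths tgt a P h) (j0F tgt a P h)) :
    w ∈ wv tgt a P (i0F tgt a P h) ∨ w ∈ wv tgt a P (j0F tgt a P h) := by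
  rw [wv_new_j0] at hw
  rcases List.mem_append.mp hw with hw | hw
  · exact Or.inr ((List.take_sublist _ _).subset hw)
  · exact Or.inl ((List.drop_sublist _ _).subset hw)

lemma mem_old_i0 (P : Fin k → List E) (h : (meets tgt a P).Nonempty) {w : Fin n}
    (hw : w ∈ wv tgt a P (i0F tgt a P h)) :
    w ∈ wv tgt a (newPaths tgt a P h) (i0F tgt a P h) ∨
      w ∈ wv tgt a (newPaths tgt a P h) (j0F tgt a P h) := by
  rw [← List.take_append_drop (m0F tgt a P h + 1) (wv tgt a P (i0F tgt a P h))] at hw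
  rcases List.mem_append.mp hw with hw | hw
  · exact Or.inl (by rw [wv_new_i0]; exact List.mem_append_left _ hw)
  · exact Or.inr (by rw [wv_new_j0]; exact List.mem_append_right _ hw)

lemma mem_old_j0 (P : Fin k → List E) (h : (meets tgt a P).Nonempty) {w : Fin n}
    (hw : w ∈ wv tgt a P (j0F tgt a P h)) :
    w ∈ wv tgt a (newPaths tgt a P h) (i0F tgt a P h) ∨
      w ∈ wv tgt a (newPaths tgt a P h) (j0F tgt a P h) := by
  rw [← List.take_append_drop (mjF tgt a P h + 1) (wv tgt a P (j0F tgt a P h))] at hw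
  rcases List.mem_append.mp hw with hw | hw
  · exact Or.inr (by rw [wv_new_j0]; exact List.mem_append_left _ hw)
  · exact Or.inl (by rw [wv_new_i0]; exact List.mem_append_right _ hw)

lemma v0_at' (P : Fin k → List E) (h : (meets tgt a P).Nonempty) :
    (walkVerts tgt (a (i0F tgt a P h)) (P (i0F tgt a P h)))[m0F tgt a P h]'(m0_lt tgt a P h)
      = v0F tgt a P h := v0_at tgt a P h

lemma v0_at_j' (P : Fin k → List E) (h : (meets tgt a P).Nonempty) :
    (walkVerts tgt (a (j0F tgt a P h)) (P (j0F tgt a P h)))[mjF tgt a P h]'(mj_lt tgt a P h)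
      = v0F tgt a P h := v0_at_j tgt a P h

lemma new_tuplePaths {σ : Equiv.Perm (Fin k)} {P : Fin k → List E}
    (hT : TuplePaths src tgt a b σ P) (h : (meets tgt a P).Nonempty) :
    TuplePaths src tgt a b (σ * Equiv.swap (i0F tgt a P h) (j0F tgt a P h))
      (newPaths tgt a P h) := by
  have hpi : IsWalkFrom src tgt (a (i0F tgt a P h)) (v0F tgt a P h)
      ((P (i0F tgt a P h)).take (m0F tgt a P h)) := by
    have h1 := (walk_split (hT (i0F tgt a P h)) (m0F tgt a P h) (m0_lt tgt a P h)).1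
    rwa [v0_at' tgt a P h] at h1
  have hsi : IsWalkFrom src tgt (v0F tgt a P h) (b (σ (i0F tgt a P h)))
      ((P (i0F tgt a P h)).drop (m0F tgt a P h)) := by
    have h1 := (walk_split (hT (i0F tgt a P h)) (m0F tgt a P h) (m0_lt tgt a P h)).2
    rwa [v0_at' tgt a P h] at h1
  have hpj : IsWalkFrom src tgt (a (j0F tgt a P h)) (v0F tgt a P h)
      ((P (j0F tgt a P h)).take (mjF tgt a P h)) := by
    have h1 := (walk_split (hT (j0F tgt a P h)) (mjF tgt a P h) (mj_lt tgt a P h)).1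
    rwa [v0_at_j' tgt a P h] at h1
  have hsj : IsWalkFrom src tgt (v0F tgt a P h) (b (σ (j0F tgt a P h)))
      ((P (j0F tgt a P h)).drop (mjF tgt a P h)) := by
    have h1 := (walk_split (hT (j0F tgt a P h)) (mjF tgt a P h) (mj_lt tgt a P h)).2
    rwa [v0_at_j' tgt a P h] at h1
  intro i
  by_cases h1 : i = i0F tgt a P h
  · subst h1
    rw [newPaths_i0, Equiv.Perm.mul_apply, Equiv.swap_apply_left]
    exact isWalkFrom_append hpi hsj
  · by_cases h2 : i = j0F tgt a P h
    · subst h2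
      rw [newPaths_j0, Equiv.Perm.mul_apply, Equiv.swap_apply_right]
      exact isWalkFrom_append hpj hsi
    · rw [newPaths_other tgt a P h h1 h2, Equiv.Perm.mul_apply,
        Equiv.swap_apply_of_ne_of_ne h1 h2]
      exact hT i

lemma prod_pair {M : Type*} [CommMonoid M] {f g : Fin k → M} {i0 j0 : Fin k} (hne : j0 ≠ i0)
    (hext : ∀ i, i ≠ i0 → i ≠ j0 → g i = f i) (hpair : g i0 * g j0 = f i0 * f j0) :
    ∏ i, g i = ∏ i, f i := by
  have hj0 : j0 ∈ Finset.univ.erase i0 := Finset.mem_erase.mpr ⟨hne, Finset.mem_univ _⟩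
  rw [← Finset.mul_prod_erase Finset.univ g (Finset.mem_univ i0),
      ← Finset.mul_prod_erase _ g hj0, ← mul_assoc, hpair,
      ← Finset.mul_prod_erase Finset.univ f (Finset.mem_univ i0),
      ← Finset.mul_prod_erase _ f hj0, ← mul_assoc]
  congr 1
  refine Finset.prod_congr rfl fun i hi => ?_
  rw [Finset.mem_erase, Finset.mem_erase] at hi
  exact hext i hi.2.1 hi.1

lemma colWt_newPaths (P : Fin k → List E) (h : (meets tgt a P).Nonempty) :
    colWt (newPaths tgt a P h) = colWt P := by
  unfold colWt
  refine prod_pair (j0_spec tgt a P h).1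
    (fun i h1 h2 => by rw [newPaths_other tgt a P h h1 h2]) ?_
  rw [newPaths_i0, newPaths_j0, pathWt_append, pathWt_append]
  conv_rhs => rw [← List.take_append_drop (m0F tgt a P h) (P (i0F tgt a P h)),
    ← List.take_append_drop (mjF tgt a P h) (P (j0F tgt a P h)),
    pathWt_append, pathWt_append]
  ring

lemma m0_le_len (P : Fin k → List E) (h : (meets tgt a P).Nonempty) :
    m0F tgt a P h ≤ (P (i0F tgt a P h)).length := by
  have := m0_lt tgt a P h
  rw [wv, walkVerts_length] at this
  omega

lemma mj_le_len (P : Fin k → List E) (h : (meets tgt a P).Nonempty) :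
    mjF tgt a P h ≤ (P (j0F tgt a P h)).length := by
  have := mj_lt tgt a P h
  rw [wv, walkVerts_length] at this
  omega

lemma wv_new_i0_getElem (P : Fin k → List E) (h : (meets tgt a P).Nonempty) {m : ℕ}
    (hm : m < m0F tgt a P h + 1) :
    (wv tgt a (newPaths tgt a P h) (i0F tgt a P h))[m]? =
      (wv tgt a P (i0F tgt a P h))[m]? := by
  rw [wv_new_i0, List.getElem?_append_left, List.getElem?_take_of_lt hm]
  rw [List.length_take]
  exact lt_min hm (Nat.lt_of_lt_of_le (Nat.lt_of_lt_of_le hm (m0_lt tgt a P h)) le_rfl)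

lemma wv_new_j0_getElem (P : Fin k → List E) (h : (meets tgt a P).Nonempty) {m : ℕ}
    (hm : m < mjF tgt a P h + 1) :
    (wv tgt a (newPaths tgt a P h) (j0F tgt a P h))[m]? =
      (wv tgt a P (j0F tgt a P h))[m]? := by
  rw [wv_new_j0, List.getElem?_append_left, List.getElem?_take_of_lt hm]
  rw [List.length_take]
  exact lt_min hm (Nat.lt_of_lt_of_le (Nat.lt_of_lt_of_le hm (mj_lt tgt a P h)) le_rfl)

lemma wv_new_at_m0 (P : Fin k → List E) (h : (meets tgt a P).Nonempty) :
    (wv tgt a (newPaths tgt a P h) (i0F tgt a P h))[m0F tgt a P h]? =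
      some (v0F tgt a P h) := by
  rw [wv_new_i0_getElem tgt a P h (Nat.lt_succ_self _)]
  exact (v0_spec tgt a P h).1

lemma i0_new (P : Fin k → List E) (h : (meets tgt a P).Nonempty) :
    i0F tgt a (newPaths tgt a P h) (meets_new_nonempty tgt a P h) = i0F tgt a P h := by
  apply le_antisymm
  · apply Finset.min'_le
    exact (mem_meets tgt a).mpr ⟨j0F tgt a P h, (j0_spec tgt a P h).1,
      v0F tgt a P h, v0_mem_new_i0 tgt a P h, v0_mem_new_j0 tgt a P h⟩
  · have hmin : ∀ i ∈ meets tgt a (newPaths tgt a P h), i0F tgt a P h ≤ i := by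
      intro i hi
      obtain ⟨j, hj, w, hwi, hwj⟩ := (mem_meets tgt a).mp hi
      by_cases e1 : i = i0F tgt a P h
      · exact le_of_eq e1.symm
      by_cases e2 : i = j0F tgt a P h
      · subst e2; exact i0_le_j0 tgt a P h
      rw [wv_new_other tgt a P h e1 e2] at hwi
      have hex : ∃ j', j' ≠ i ∧ w ∈ wv tgt a P j' := by
        by_cases f1 : j = i0F tgt a P h
        · subst f1
          rcases mem_new_i0 tgt a P h hwj with hc | hc
          · exact ⟨i0F tgt a P h, Ne.symm e1, hc⟩
          · exact ⟨j0F tgt a P h, Ne.symm e2, hc⟩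
        by_cases f2 : j = j0F tgt a P h
        · subst f2
          rcases mem_new_j0 tgt a P h hwj with hc | hc
          · exact ⟨i0F tgt a P h, Ne.symm e1, hc⟩
          · exact ⟨j0F tgt a P h, Ne.symm e2, hc⟩
        · rw [wv_new_other tgt a P h f1 f2] at hwj
          exact ⟨j, hj, hwj⟩
      obtain ⟨j', hj', hwj'⟩ := hex
      exact Finset.min'_le _ _ ((mem_meets tgt a).mpr ⟨j', hj', w, hwi, hwj'⟩)
    exact hmin _ (Finset.min'_mem _ _)

lemma m0_new (hacyc : ∀ (v : Fin n) (l : List E), IsWalkFrom src tgt v v l → l = [])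
    {σ : Equiv.Perm (Fin k)} {P : Fin k → List E} (hT : TuplePaths src tgt a b σ P)
    (h : (meets tgt a P).Nonempty) :
    m0F tgt a (newPaths tgt a P h) (meets_new_nonempty tgt a P h) = m0F tgt a P h := by
  have hnd : (wv tgt a P (i0F tgt a P h)).Nodup :=
    nodup_walkVerts hacyc (hT (i0F tgt a P h))
  refine (Nat.find_eq_iff _).mpr ⟨?_, ?_⟩
  · rw [i0_new]
    exact ⟨v0F tgt a P h, wv_new_at_m0 tgt a P h,
      j0F tgt a P h, (j0_spec tgt a P h).1, v0_mem_new_j0 tgt a P h⟩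
  · intro m hm hQP
    rw [i0_new] at hQP
    obtain ⟨w, hw, j, hj, hwj⟩ := hQP
    rw [wv_new_i0_getElem tgt a P h (by omega)] at hw
    by_cases f2 : j = j0F tgt a P h
    · subst f2
      rw [wv_new_j0] at hwj
      rcases List.mem_append.mp hwj with hc | hc
      · exact m0_min tgt a P h m hm
          ⟨w, hw, j0F tgt a P h, (j0_spec tgt a P h).1, (List.take_sublist _ _).subset hc⟩
      · obtain ⟨t, ht, hte⟩ := List.mem_iff_getElem.mp hc
        rw [List.getElem_drop] at hte
        obtain ⟨hmlt, hmw⟩ := List.getElem?_eq_some_iff.mp hw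
        have : m = m0F tgt a P h + 1 + t := hnd.getElem_inj_iff.mp (hmw.trans hte.symm)
        omega
    · by_cases f1 : j = i0F tgt a P h
      · exact hj f1
      · rw [wv_new_other tgt a P h f1 f2] at hwj
        exact m0_min tgt a P h m hm ⟨w, hw, j, hj, hwj⟩

lemma v0_new (hacyc : ∀ (v : Fin n) (l : List E), IsWalkFrom src tgt v v l → l = [])
    {σ : Equiv.Perm (Fin k)} {P : Fin k → List E} (hT : TuplePaths src tgt a b σ P)
    (h : (meets tgt a P).Nonempty) :
    v0F tgt a (newPaths tgt a P h) (meets_new_nonempty tgt a P h) = v0F tgt a P h := by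
  have e1 : v0F tgt a (newPaths tgt a P h) (meets_new_nonempty tgt a P h) =
      (wv tgt a (newPaths tgt a P h) (i0F tgt a P h)).getD (m0F tgt a P h)
        (a (i0F tgt a P h)) := by
    unfold v0F
    rw [i0_new, m0_new src tgt a b hacyc hT]
  rw [e1]
  obtain ⟨hlt, hg⟩ := List.getElem?_eq_some_iff.mp (wv_new_at_m0 tgt a P h)
  rw [List.getD_eq_getElem _ _ hlt, hg]

lemma j0_new (hacyc : ∀ (v : Fin n) (l : List E), IsWalkFrom src tgt v v l → l = [])
    {σ : Equiv.Perm (Fin k)} {P : Fin k → List E} (hT : TuplePaths src tgt a b σ P)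
    (h : (meets tgt a P).Nonempty) :
    j0F tgt a (newPaths tgt a P h) (meets_new_nonempty tgt a P h) = j0F tgt a P h := by
  apply le_antisymm
  · apply Finset.min'_le
    simp only [jset, Finset.mem_filter, Finset.mem_univ, true_and]
    rw [i0_new, v0_new src tgt a b hacyc hT]
    exact ⟨(j0_spec tgt a P h).1, v0_mem_new_j0 tgt a P h⟩
  · have hmin : ∀ jj ∈ jset tgt a (newPaths tgt a P h) (meets_new_nonempty tgt a P h),
        j0F tgt a P h ≤ jj := by
      intro jj hjj
      simp only [jset, Finset.mem_filter, Finset.mem_univ, true_and] at hjj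
      rw [i0_new, v0_new src tgt a b hacyc hT] at hjj
      obtain ⟨hjj1, hjj2⟩ := hjj
      by_cases e2 : jj = j0F tgt a P h
      · exact le_of_eq e2.symm
      · rw [wv_new_other tgt a P h hjj1 e2] at hjj2
        apply Finset.min'_le
        simp only [jset, Finset.mem_filter, Finset.mem_univ, true_and]
        exact ⟨hjj1, hjj2⟩
    exact hmin _ (Finset.min'_mem _ _)

lemma mj_new (hacyc : ∀ (v : Fin n) (l : List E), IsWalkFrom src tgt v v l → l = [])
    {σ : Equiv.Perm (Fin k)} {P : Fin k → List E} (hT : TuplePaths src tgt a b σ P)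
    (h : (meets tgt a P).Nonempty) :
    mjF tgt a (newPaths tgt a P h) (meets_new_nonempty tgt a P h) = mjF tgt a P h := by
  refine (Nat.find_eq_iff _).mpr ⟨?_, ?_⟩
  · rw [j0_new src tgt a b hacyc hT, v0_new src tgt a b hacyc hT,
      wv_new_j0_getElem tgt a P h (Nat.lt_succ_self _)]
    exact mj_spec tgt a P h
  · intro m hm
    rw [j0_new src tgt a b hacyc hT, v0_new src tgt a b hacyc hT,
      wv_new_j0_getElem tgt a P h (by omega)]
    exact mj_min tgt a P h m hm

lemma newPaths_new (hacyc : ∀ (v : Fin n) (l : List E), IsWalkFrom src tgt v v l → l = [])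
    {σ : Equiv.Perm (Fin k)} {P : Fin k → List E} (hT : TuplePaths src tgt a b σ P)
    (h : (meets tgt a P).Nonempty) :
    newPaths tgt a (newPaths tgt a P h) (meets_new_nonempty tgt a P h) = P := by
  have e1 : ((P (i0F tgt a P h)).take (m0F tgt a P h)).length = m0F tgt a P h := by
    rw [List.length_take]
    exact min_eq_left (m0_le_len tgt a P h)
  have e2 : ((P (j0F tgt a P h)).take (mjF tgt a P h)).length = mjF tgt a P h := by
    rw [List.length_take]
    exact min_eq_left (mj_le_len tgt a P h)
  funext i
  by_cases h1 : i = i0F tgt a P h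
  · subst h1
    conv_lhs => rw [← i0_new tgt a P h]
    rw [newPaths_i0, i0_new, j0_new src tgt a b hacyc hT, m0_new src tgt a b hacyc hT,
      mj_new src tgt a b hacyc hT, newPaths_i0, newPaths_j0,
      List.take_left' e1, List.drop_left' e2, List.take_append_drop]
  · by_cases h2 : i = j0F tgt a P h
    · subst h2
      conv_lhs => rw [← j0_new src tgt a b hacyc hT]
      rw [newPaths_j0, i0_new, j0_new src tgt a b hacyc hT, m0_new src tgt a b hacyc hT,
        mj_new src tgt a b hacyc hT, newPaths_i0, newPaths_j0,
        List.take_left' e2, List.drop_left' e1, List.take_append_drop]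
    · rw [newPaths_other tgt a (newPaths tgt a P h) (meets_new_nonempty tgt a P h)
        (by rw [i0_new]; exact h1) (by rw [j0_new src tgt a b hacyc hT]; exact h2),
        newPaths_other tgt a P h h1 h2]

lemma swapMap_eq (q : Equiv.Perm (Fin k) × (Fin k → List E))
    (h : (meets tgt a q.2).Nonempty) :
    swapMap tgt a q =
      (q.1 * Equiv.swap (i0F tgt a q.2 h) (j0F tgt a q.2 h), newPaths tgt a q.2 h) :=
  dif_pos h

set_option maxHeartbeats 2000000 in
lemma sum_bad_eq_zero
    (hacyc : ∀ (v : Fin n) (l : List E), IsWalkFrom src tgt v v l → l = []) :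
    ∑ q ∈ (bigS src tgt a b).filter (fun q => ¬ Disj tgt a q.2),
      ((Equiv.Perm.sign q.1 : ℤ) : MvPowerSeries E ℤ) * colWt q.2 = 0 := by
  have hmem : ∀ q ∈ (bigS src tgt a b).filter (fun q => ¬ Disj tgt a q.2),
      TuplePaths src tgt a b q.1 q.2 ∧ (meets tgt a q.2).Nonempty := by
    intro q hq
    rw [Finset.mem_filter] at hq
    obtain ⟨hq1, hq2⟩ := hq
    rw [bigS, Finset.mem_filter] at hq1
    exact ⟨hq1.2, (meets_nonempty_iff tgt a).mpr hq2⟩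
  refine Finset.sum_involution (fun q _ => swapMap tgt a q) ?_ ?_ ?_ ?_
  · -- f q + f (swapMap q) = 0
    intro q hq
    obtain ⟨hT, h⟩ := hmem q hq
    rw [swapMap_eq tgt a q h]
    have hne : i0F tgt a q.2 h ≠ j0F tgt a q.2 h := Ne.symm (j0_spec tgt a q.2 h).1
    have hsgn : (Equiv.Perm.sign (q.1 * Equiv.swap (i0F tgt a q.2 h) (j0F tgt a q.2 h)) : ℤ)
        = -(Equiv.Perm.sign q.1 : ℤ) := by
      rw [Equiv.Perm.sign_mul, Equiv.Perm.sign_swap hne]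
      simp
    show ((Equiv.Perm.sign q.1 : ℤ) : MvPowerSeries E ℤ) * colWt q.2 +
      ((Equiv.Perm.sign (q.1 * Equiv.swap (i0F tgt a q.2 h) (j0F tgt a q.2 h)) : ℤ) :
        MvPowerSeries E ℤ) * colWt (newPaths tgt a q.2 h) = 0
    rw [hsgn, colWt_newPaths]
    push_cast
    ring
  · -- swapMap q ≠ q
    intro q hq _
    obtain ⟨hT, h⟩ := hmem q hq
    rw [swapMap_eq tgt a q h]
    intro heq
    have h1 := congrArg Prod.fst heq
    simp only at h1
    have h2 : Equiv.swap (i0F tgt a q.2 h) (j0F tgt a q.2 h) = 1 := by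
      have := mul_left_cancel (a := q.1)
        (by rw [h1, mul_one] : q.1 * Equiv.swap (i0F tgt a q.2 h) (j0F tgt a q.2 h) = q.1 * 1)
      exact this
    have h3 : j0F tgt a q.2 h = i0F tgt a q.2 h := by
      have := congrArg (fun e => e (i0F tgt a q.2 h)) h2
      simpa [Equiv.swap_apply_left] using this
    exact (j0_spec tgt a q.2 h).1 h3
  · -- swapMap q ∈ bad
    intro q hq
    obtain ⟨hT, h⟩ := hmem q hq
    rw [swapMap_eq tgt a q h, Finset.mem_filter]
    constructor
    · rw [bigS, Finset.mem_filter]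
      refine ⟨Finset.mem_product.mpr ⟨Finset.mem_univ _, ?_⟩, ?_⟩
      · rw [Fintype.mem_piFinset]
        intro i
        exact mem_allW.mpr (walk_length_lt src tgt hacyc (new_tuplePaths src tgt a b hT h i))
      · exact new_tuplePaths src tgt a b hT h
    · show ¬ Disj tgt a (newPaths tgt a q.2 h)
      exact (meets_nonempty_iff tgt a).mp (meets_new_nonempty tgt a q.2 h)
  · -- involution
    intro q hq
    obtain ⟨hT, h⟩ := hmem q hq
    rw [swapMap_eq tgt a q h,
      swapMap_eq tgt a _ (meets_new_nonempty tgt a q.2 h)]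
    simp only
    rw [i0_new tgt a q.2 h, j0_new src tgt a b hacyc hT h,
      newPaths_new src tgt a b hacyc hT h, mul_assoc, Equiv.swap_mul_self, mul_one]

end Det

/-- Lindström–Gessel–Viennot. If the finite directed multigraph `G`
has no directed cycles, then every minor `Δ_{A,B}(M)` of the weighted path matrix
`M = (I - A)⁻¹` equals the (finite) signed sum over all collections of self-avoiding,
pairwise vertex-disjoint directed paths connecting `A` bijectively to `B`. -/
theorem minor_eq_sum_disjoint_path_systems_of_acyclic (src tgt : E → Fin n)
    (hacyc : ∀ (v : Fin n) (l : List E), IsWalkFrom src tgt v v l → l = [])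
    (a b : Fin k → Fin n) (ha : Function.Injective a) (hb : Function.Injective b) :
    {P : Equiv.Perm (Fin k) × (Fin k → List E) |
      IsSystem src tgt a b P.1 P.2}.Finite ∧
    (((1 - adjMat src tgt)⁻¹).submatrix a b).det =
      ∑ᶠ P ∈ {P : Equiv.Perm (Fin k) × (Fin k → List E) |
          IsSystem src tgt a b P.1 P.2},
        ((Equiv.Perm.sign P.1 : ℤ) : MvPowerSeries E ℤ) * colWt P.2 := by
  classical
  set good : Finset (Equiv.Perm (Fin k) × (Fin k → List E)) :=
    (bigS src tgt a b).filter (fun q => Disj tgt a q.2) with hgood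
  have hset : {P : Equiv.Perm (Fin k) × (Fin k → List E) |
      IsSystem src tgt a b P.1 P.2} = ↑good := by
    ext q
    simp only [Set.mem_setOf_eq, hgood, Finset.coe_filter, Finset.mem_coe,
      Finset.mem_filter, bigS, Finset.mem_product, Finset.mem_univ, true_and,
      Fintype.mem_piFinset]
    constructor
    · rintro ⟨h1, _, h3⟩
      exact ⟨⟨fun i => mem_allW.mpr (walk_length_lt src tgt hacyc (h1 i)), h1⟩, h3⟩
    · rintro ⟨⟨_, h1⟩, h3⟩
      exact ⟨h1, fun i => nodup_walkVerts hacyc (h1 i), h3⟩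
  constructor
  · rw [hset]
    exact good.finite_toSet
  · rw [hset, finsum_mem_coe_finset, det_eq_sum_bigS src tgt a b hacyc,
      ← Finset.sum_filter_add_sum_filter_not (bigS src tgt a b)
        (fun q => Disj tgt a q.2), sum_bad_eq_zero src tgt a b hacyc, add_zero]

end PathMatrix
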